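/- arXiv:1409.2056 — 3 statements merged into one kernel-verified Lean document; each statement's English description precedes it below -/
import Mathlib

section
/- Let u be a nonzero complex number, k ≥ 1 a natural number, and G_k(z) = conj(u)·z^k + u·conj(z)^k. Then there exists a real θ ∈ {0, π/(2k), π/k, 3π/(2k)} and a negative real constant c such that for all real α > 0, G_k(α·e^(iθ)·u) = c·α^k; in particular G_k(α·e^(iθ)·u) < 0 for all α > 0. -/
open Complex

lemma Gcalc (u : ℂ) (k : ℕ) (θ α : ℝ) :
    (starRingEnd ℂ) u * ((α : ℂ) * Complex.exp (θ * Complex.I) * u) ^ k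
      + u * ((starRingEnd ℂ) ((α : ℂ) * Complex.exp (θ * Complex.I) * u)) ^ k
    = (α : ℂ) ^ k *
        (2 * ((Complex.exp ((k : ℂ) * θ * Complex.I)
            * ((starRingEnd ℂ) u * u ^ k)).re : ℂ)) := by
  have h1 : Complex.exp ((θ : ℂ) * Complex.I) ^ k
      = Complex.exp ((k : ℂ) * θ * Complex.I) := by
    rw [← Complex.exp_nat_mul]; ring_nf
  set z := Complex.exp ((k : ℂ) * θ * Complex.I) * ((starRingEnd ℂ) u * u ^ k) with hz
  have hc : (starRingEnd ℂ) (Complex.exp ((θ : ℂ) * Complex.I))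
      = Complex.exp (-((θ : ℂ) * Complex.I)) := by
    rw [← Complex.exp_conj]; simp [Complex.conj_ofReal]
  have hneg : Complex.exp (-((θ : ℂ) * Complex.I)) ^ k
      = Complex.exp (-((k : ℂ) * θ * Complex.I)) := by
    rw [← Complex.exp_nat_mul]; ring_nf
  have hconjz : (starRingEnd ℂ) z
      = Complex.exp (-((k : ℂ) * θ * Complex.I)) * (u * ((starRingEnd ℂ) u) ^ k) := by
    rw [hz]
    rw [map_mul, map_mul, map_pow, ← Complex.exp_conj]
    simp [Complex.conj_ofReal, mul_comm]
  have h2 : (starRingEnd ℂ) u * ((α : ℂ) * Complex.exp (θ * Complex.I) * u) ^ k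
      + u * ((starRingEnd ℂ) ((α : ℂ) * Complex.exp (θ * Complex.I) * u)) ^ k
      = (α : ℂ) ^ k * (z + (starRingEnd ℂ) z) := by
    rw [hconjz, hz]
    simp only [map_mul, map_pow, Complex.conj_ofReal, hc, mul_pow, h1, hneg]
    ring
  rw [h2, Complex.add_conj]
  push_cast
  ring

theorem stmt2 (u : ℂ) (hu : u ≠ 0) (k : ℕ) (hk : 1 ≤ k)
    (G : ℂ → ℂ) (hG : ∀ z, G z = (starRingEnd ℂ) u * z ^ k + u * ((starRingEnd ℂ) z) ^ k) :
    ∃ θ ∈ ({0, Real.pi / (2 * k), Real.pi / k, 3 * Real.pi / (2 * k)} : Set ℝ),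
      ∃ c : ℝ, c < 0 ∧
        (∀ α : ℝ, 0 < α →
          G ((α : ℂ) * Complex.exp (θ * Complex.I) * u) = (c : ℂ) * (α : ℂ) ^ k) ∧
        (∀ α : ℝ, 0 < α →
          (G ((α : ℂ) * Complex.exp (θ * Complex.I) * u)).re < 0) := by
  have hk0 : (k : ℂ) ≠ 0 := Nat.cast_ne_zero.mpr (by omega)
  have hk0' : (k : ℝ) ≠ 0 := Nat.cast_ne_zero.mpr (by omega)
  set w : ℂ := (starRingEnd ℂ) u * u ^ k with hw
  have hwne : w ≠ 0 := by
    apply mul_ne_zero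
    · simpa using hu
    · exact pow_ne_zero _ hu
  -- for each candidate θ, compute exp((k:ℂ)*θ*I)
  have key : ∀ θ : ℝ, Complex.exp ((k : ℂ) * θ * Complex.I) * w ≠ 0 →
      ((Complex.exp ((k : ℂ) * θ * Complex.I) * w).re < 0 →
      ∃ c : ℝ, c < 0 ∧
        (∀ α : ℝ, 0 < α →
          G ((α : ℂ) * Complex.exp (θ * Complex.I) * u) = (c : ℂ) * (α : ℂ) ^ k) ∧
        (∀ α : ℝ, 0 < α →
          (G ((α : ℂ) * Complex.exp (θ * Complex.I) * u)).re < 0)) := by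
    intro θ _ hre
    refine ⟨2 * (Complex.exp ((k : ℂ) * θ * Complex.I) * w).re, by linarith, ?_, ?_⟩
    · intro α hα
      rw [hG, Gcalc]
      push_cast
      ring
    · intro α hα
      rw [hG, Gcalc]
      have : ((α : ℂ) ^ k *
          (2 * ((Complex.exp ((k : ℂ) * θ * Complex.I) * w).re : ℂ))).re
          = α ^ k * (2 * (Complex.exp ((k : ℂ) * θ * Complex.I) * w).re) := by
        simp [← Complex.ofReal_pow, ← Complex.ofReal_mul]
      rw [this]
      have hp : (0 : ℝ) < α ^ k := pow_pos hα k
      nlinarith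
  rcases lt_trichotomy w.re 0 with h | h | h
  · refine ⟨0, by simp, ?_⟩
    apply key 0
    · simp [hwne]
    · simpa using h
  · have him : w.im ≠ 0 := by
      intro h'
      exact hwne (Complex.ext h h')
    have e2 : Complex.exp ((k : ℂ) * ((Real.pi / (2 * k) : ℝ) : ℂ) * Complex.I)
        = Complex.I := by
      have : (k : ℂ) * ((Real.pi / (2 * k) : ℝ) : ℂ) = (Real.pi / 2 : ℝ) := by
        push_cast
        field_simp
      rw [this]
      rw [Complex.exp_mul_I, ← Complex.ofReal_cos, ← Complex.ofReal_sin]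
      simp
    have e4 : Complex.exp ((k : ℂ) * ((3 * Real.pi / (2 * k) : ℝ) : ℂ) * Complex.I)
        = -Complex.I := by
      have : (k : ℂ) * ((3 * Real.pi / (2 * k) : ℝ) : ℂ) = ((3 * Real.pi / 2 : ℝ) : ℂ) := by
        push_cast
        field_simp
      rw [this]
      have := Complex.exp_mul_I ((3 * Real.pi / 2 : ℝ) : ℂ)
      rw [this]
      push_cast
      rw [show ((3:ℂ) * Real.pi / 2) = ((3 * Real.pi / 2 : ℝ) : ℂ) by push_cast; ring]
      rw [← Complex.ofReal_cos, ← Complex.ofReal_sin]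
      have hc : Real.cos (3 * Real.pi / 2) = 0 := by
        rw [show (3 * Real.pi / 2) = Real.pi + Real.pi/2 by ring]
        simp [Real.cos_pi_div_two, Real.cos_add]
      have hs : Real.sin (3 * Real.pi / 2) = -1 := by
        rw [show (3 * Real.pi / 2) = Real.pi + Real.pi/2 by ring]
        simp [Real.sin_add]
      rw [hc, hs]
      simp
    rcases lt_or_gt_of_ne him with him' | him'
    · -- w.im < 0, take θ = 3π/(2k), (-I*w).re = w.im < 0
      refine ⟨3 * Real.pi / (2 * k), by simp, ?_⟩
      apply key _
      · rw [e4]; simp [hwne]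
      · rw [e4]; simpa using him'
    · -- w.im > 0, take θ = π/(2k), (I*w).re = -w.im < 0
      refine ⟨Real.pi / (2 * k), by simp, ?_⟩
      apply key _
      · rw [e2]; simp [hwne]
      · rw [e2]; simpa using him'
  · -- w.re > 0, θ = π/k
    have e3 : Complex.exp ((k : ℂ) * ((Real.pi / k : ℝ) : ℂ) * Complex.I) = -1 := by
      have : (k : ℂ) * ((Real.pi / k : ℝ) : ℂ) = (Real.pi : ℂ) := by
        push_cast
        field_simp
      rw [this]
      exact Complex.exp_pi_mul_I
    refine ⟨Real.pi / k, by simp, ?_⟩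
    apply key _
    · rw [e3]; simp [hwne]
    · rw [e3]; simpa using h
end

section
/- Let p be a complex polynomial of degree n ≥ 1 and z₀ ∈ ℂ with p(z₀) ≠ 0. Then there exists a complex number d and a real α* > 0 such that for all α ∈ (0, α*), |p(z₀ + α·d)| < |p(z₀)|. That is, at any non-root point, the modulus of p admits a direction of strict descent. -/
open Polynomial Complex

theorem stmt8 (p : Polynomial ℂ) (hp : 1 ≤ p.natDegree) (z₀ : ℂ) (hz : p.eval z₀ ≠ 0) :
    ∃ d : ℂ, ∃ αs : ℝ, 0 < αs ∧
      ∀ α : ℝ, α ∈ Set.Ioo 0 αs →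
        ‖p.eval (z₀ + (α : ℂ) * d)‖ < ‖p.eval z₀‖ := by
  set q : Polynomial ℂ := p.comp (X + C z₀) with hq
  have hqeval : ∀ w : ℂ, q.eval w = p.eval (z₀ + w) := by
    intro w; simp [hq, eval_comp, add_comm]
  set c : ℂ := p.eval z₀ with hcdef
  have hc : c ≠ 0 := hz
  have hc0 : q.coeff 0 = c := by
    have := hqeval 0
    simpa [coeff_zero_eq_eval_zero] using this
  have hqdeg : q.natDegree = p.natDegree := by
    simp [hq, natDegree_comp]
  have hqne : q ≠ 0 := by
    intro h
    apply hc
    rw [← hc0, h, coeff_zero]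
  have hex : ∃ j : ℕ, q.coeff (j + 1) ≠ 0 := by
    refine ⟨p.natDegree - 1, ?_⟩
    have h1 : p.natDegree - 1 + 1 = q.natDegree := by omega
    rw [h1]
    exact fun h => hqne (Polynomial.leadingCoeff_eq_zero.mp h)
  set m : ℕ := Nat.find hex with hm
  set k : ℕ := m + 1 with hkdef
  have hk : q.coeff k ≠ 0 := Nat.find_spec hex
  have hmin : ∀ j, 0 < j → j < k → q.coeff j = 0 := by
    intro j hj1 hjk
    have := Nat.find_min hex (m := j - 1) (by omega)
    simpa [show j - 1 + 1 = j by omega] using not_not.mp this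
  obtain ⟨d, hd⟩ := IsAlgClosed.exists_pow_nat_eq (-c / q.coeff k) (n := k) (by omega)
  have hakd : q.coeff k * d ^ k = -c := by
    rw [hd]; field_simp
  set s : Polynomial ℂ := q - C c - C (q.coeff k) * X ^ k with hs
  have hscoeff : ∀ j < k + 1, s.coeff j = 0 := by
    intro j hj
    have hcoe : s.coeff j = q.coeff j - (if j = 0 then c else 0)
        - q.coeff k * (if j = k then 1 else 0) := by
      simp [hs, coeff_sub, coeff_C, coeff_X_pow, mul_ite]
    rcases Nat.eq_zero_or_pos j with h0 | h0
    · subst h0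
      rw [hcoe, if_pos rfl, if_neg (show (0:ℕ) ≠ k by omega), hc0]
      ring
    rcases eq_or_ne j k with hjk | hjk
    · rw [hcoe, hjk, if_neg (show k ≠ 0 by omega), if_pos rfl]
      ring
    · have hq0 := hmin j h0 (by omega)
      rw [hcoe, if_neg (show j ≠ 0 by omega), if_neg hjk, hq0]
      ring
  obtain ⟨t, ht⟩ : (X : Polynomial ℂ) ^ (k + 1) ∣ s :=
    (Polynomial.X_pow_dvd_iff).mpr hscoeff
  have heval : ∀ w : ℂ, q.eval w = c + q.coeff k * w ^ k + s.eval w := by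
    intro w
    simp only [hs, eval_sub, eval_mul, eval_pow, eval_C, eval_X]
    ring
  -- bound t on the closed unit ball
  obtain ⟨w₀, -, hw₀⟩ := (isCompact_closedBall (0:ℂ) 1).exists_isMaxOn
    (Metric.nonempty_closedBall.mpr zero_le_one)
    ((continuous_norm.comp t.continuous).continuousOn)
  set M : ℝ := ‖t.eval w₀‖ with hM
  have hM0 : 0 ≤ M := norm_nonneg _
  set D : ℝ := (‖d‖) ^ (k + 1) with hD
  have hD0 : 0 ≤ D := pow_nonneg (norm_nonneg d) _
  set αs : ℝ := min (1 / (‖d‖ + 1)) (‖c‖ / (D * M + 1)) with hαs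
  have habsd : 0 ≤ ‖d‖ := norm_nonneg d
  have hαs0 : 0 < αs := by
    apply lt_min
    · positivity
    · apply div_pos (norm_pos_iff.mpr hc); positivity
  refine ⟨d, αs, hαs0, ?_⟩
  rintro α ⟨hα0, hααs⟩
  have hα1 : α < 1 := by
    have h1 : α < 1 / (‖d‖ + 1) := lt_of_lt_of_le hααs (min_le_left _ _)
    have h2 : 1 / (‖d‖ + 1) ≤ 1 := by
      rw [div_le_one (by positivity)]; linarith
    linarith
  have hαd1 : α * ‖d‖ ≤ 1 := by
    have h1 : α < 1 / (‖d‖ + 1) := lt_of_lt_of_le hααs (min_le_left _ _)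
    have h3 : α * (‖d‖ + 1) ≤ 1 := by
      rw [← le_div_iff₀ (by positivity)]; linarith
    nlinarith
  have hball : ((α : ℂ) * d) ∈ Metric.closedBall (0 : ℂ) 1 := by
    simp only [Metric.mem_closedBall, dist_zero_right]
    rw [norm_mul, Complex.norm_real, Real.norm_of_nonneg hα0.le]
    exact hαd1
  have hts : ‖t.eval ((α:ℂ)*d)‖ ≤ M := hw₀ hball
  -- estimate on s
  have habs_s : ‖s.eval ((α : ℂ) * d)‖ ≤ α ^ (k + 1) * D * M := by
    have : s.eval ((α : ℂ) * d) = ((α:ℂ) * d) ^ (k + 1) * t.eval ((α:ℂ)*d) := by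
      rw [ht]; simp
    rw [this, norm_mul, norm_pow, norm_mul, Complex.norm_real,
      Real.norm_of_nonneg hα0.le, mul_pow]
    have h1 : ‖t.eval ((α:ℂ)*d)‖ ≤ M := hts
    have h2 : (0:ℝ) ≤ α ^ (k+1) * (‖d‖) ^ (k+1) := by positivity
    calc α ^ (k+1) * (‖d‖) ^ (k+1) * ‖t.eval ((α:ℂ)*d)‖
        ≤ α ^ (k+1) * (‖d‖) ^ (k+1) * M := by
          exact mul_le_mul_of_nonneg_left h1 h2
      _ = α ^ (k+1) * D * M := by rw [hD]
  -- main term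
  have hmain : q.eval ((α:ℂ) * d) = c * (1 - (α:ℂ) ^ k) + s.eval ((α:ℂ) * d) := by
    rw [heval]
    have : q.coeff k * ((α:ℂ) * d) ^ k = (α:ℂ) ^ k * (q.coeff k * d ^ k) := by ring
    rw [this, hakd]; ring
  have habs_main : ‖c * (1 - (α:ℂ) ^ k)‖ = ‖c‖ * (1 - α ^ k) := by
    rw [norm_mul]
    congr 1
    have hcast : (1 : ℂ) - (α:ℂ) ^ k = ((1 - α ^ k : ℝ) : ℂ) := by push_cast; ring
    rw [hcast, Complex.norm_real, Real.norm_of_nonneg]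
    have hαk : α ^ k ≤ 1 := pow_le_one₀ hα0.le hα1.le
    linarith
  have hαk0 : 0 < α ^ k := pow_pos hα0 k
  have hkey : α * (D * M) < ‖c‖ := by
    have h1 : α < ‖c‖ / (D * M + 1) := lt_of_lt_of_le hααs (min_le_right _ _)
    have h2 : α * (D * M + 1) < ‖c‖ := by
      rw [← lt_div_iff₀ (by positivity)]; exact h1
    nlinarith
  have := hqeval ((α:ℂ) * d)
  rw [← this, hmain]
  calc ‖c * (1 - (α:ℂ) ^ k) + s.eval ((α:ℂ) * d)‖
      ≤ ‖c * (1 - (α:ℂ) ^ k)‖ + ‖s.eval ((α:ℂ) * d)‖ :=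
        norm_add_le _ _
    _ ≤ ‖c‖ * (1 - α ^ k) + α ^ (k + 1) * D * M := by
        rw [habs_main]; linarith
    _ < ‖c‖ := by
        have h2 : α ^ (k + 1) * D * M = α ^ k * (α * (D * M)) := by ring
        nlinarith [mul_lt_mul_of_pos_left hkey hαk0, h2]
end

section
/- Let p be a complex polynomial of degree n ≥ 1 and z₀ ∈ ℂ with p(z₀) ≠ 0. Let k be the smallest positive index with p^(k)(z₀) ≠ 0 and u = (1/k!)·p(z₀)·conj(p^(k)(z₀)). Then the real-valued function φ(α) = |p(z₀ + α·u)|² satisfies φ(α) = |p(z₀)|² + 2·Re(u^(k-1))·|u|²·α^k + o(α^k) as α → 0⁺. -/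
open Polynomial Complex

private lemma aux_normSq (A b w : ℂ) (t : ℝ) :
    Complex.normSq (A + (t : ℂ) * (b + w)) =
      Complex.normSq A + 2 * t * (A * (starRingEnd ℂ) b).re
        + (t * t * Complex.normSq (b + w) + 2 * t * (A * (starRingEnd ℂ) w).re) := by
  simp only [Complex.normSq_apply, Complex.add_re, Complex.add_im, Complex.mul_re,
    Complex.mul_im, Complex.conj_re, Complex.conj_im, Complex.ofReal_re, Complex.ofReal_im]
  ring

private lemma aux_re (A g : ℂ) (s : ℝ) :
    (A * (starRingEnd ℂ) ((s : ℂ) * g)).re = s * (A * (starRingEnd ℂ) g).re := by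
  simp only [map_mul, Complex.conj_ofReal, Complex.mul_re, Complex.mul_im,
    Complex.conj_re, Complex.conj_im, Complex.ofReal_re, Complex.ofReal_im]
  ring

theorem stmt15 (p : Polynomial ℂ) (n : ℕ) (hn : 1 ≤ n) (hdeg : p.natDegree = n)
    (z₀ : ℂ) (hz : p.eval z₀ ≠ 0)
    (k : ℕ) (hk1 : 1 ≤ k)
    (hk : ((Polynomial.derivative)^[k] p).eval z₀ ≠ 0)
    (hkmin : ∀ j : ℕ, 1 ≤ j → j < k → ((Polynomial.derivative)^[j] p).eval z₀ = 0)
    (u : ℂ) (hu : u = (1 / (k.factorial : ℂ)) * p.eval z₀ *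
      (starRingEnd ℂ) (((Polynomial.derivative)^[k] p).eval z₀))
    (φ : ℝ → ℝ) (hφ : ∀ α : ℝ, φ α = ‖p.eval (z₀ + (α : ℂ) * u)‖ ^ 2) :
    ∃ r : ℝ → ℝ,
      (∀ α : ℝ, φ α = ‖p.eval z₀‖ ^ 2
          + 2 * (u ^ (k - 1)).re * ‖u‖ ^ 2 * α ^ k + r α) ∧
      Filter.Tendsto (fun α : ℝ => r α / α ^ k) (nhdsWithin 0 (Set.Ioi 0)) (nhds 0) := by
  set A := p.eval z₀ with hA
  set B := ((Polynomial.derivative)^[k] p).eval z₀ with hB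
  set T := Polynomial.taylor z₀ p with hT
  have hcoef : ∀ i : ℕ, (i.factorial : ℂ) * T.coeff i
      = ((Polynomial.derivative)^[i] p).eval z₀ := by
    intro i
    have h1 : (Polynomial.derivative)^[i] p = i.factorial • Polynomial.hasseDeriv i p := by
      rw [← Polynomial.factorial_smul_hasseDeriv (R := ℂ) i]
      rfl
    rw [Polynomial.taylor_coeff, h1]
    simp [nsmul_eq_mul]
  have hfac : (k.factorial : ℂ) ≠ 0 := Nat.cast_ne_zero.mpr k.factorial_ne_zero
  have hc0 : T.coeff 0 = A := Polynomial.taylor_coeff_zero z₀ p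
  have hck : T.coeff k = B / (k.factorial : ℂ) := by
    rw [eq_div_iff hfac, mul_comm]
    exact hcoef k
  have hlow : ∀ d, d < k → (T - Polynomial.C A).coeff d = 0 := by
    intro d hd
    rcases Nat.eq_zero_or_pos d with h0 | h0
    · subst h0; simp [hc0]
    · have hz' : T.coeff d = 0 := by
        have h2 := hcoef d
        rw [hkmin d h0 hd] at h2
        have hd0 : (d.factorial : ℂ) ≠ 0 := Nat.cast_ne_zero.mpr d.factorial_ne_zero
        exact (mul_eq_zero.mp h2).resolve_left hd0
      rw [Polynomial.coeff_sub, hz', Polynomial.coeff_C, if_neg (by omega : ¬ d = 0), sub_zero]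
  obtain ⟨T1, hT1⟩ : (Polynomial.X : ℂ[X]) ^ k ∣ T - Polynomial.C A :=
    Polynomial.X_pow_dvd_iff.mpr hlow
  set c : ℂ := B / (k.factorial : ℂ) with hc
  have hT1c : T1.coeff 0 = c := by
    have h1 : (T - Polynomial.C A).coeff k = T.coeff k := by
      rw [Polynomial.coeff_sub, Polynomial.coeff_C, if_neg (by omega : ¬ k = 0), sub_zero]
    have h2 : ((Polynomial.X : ℂ[X]) ^ k * T1).coeff k = T1.coeff 0 := by
      simpa using Polynomial.coeff_X_pow_mul T1 k 0
    rw [hT1, h2] at h1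
    rw [h1, hck]
  obtain ⟨T2, hT2⟩ : (Polynomial.X : ℂ[X]) ∣ T1 - Polynomial.C c := by
    rw [Polynomial.X_dvd_iff]
    simp [hT1c]
  have hT1e : T1 = Polynomial.C c + Polynomial.X * T2 := by
    rw [← hT2]; ring
  have heval : ∀ w : ℂ, p.eval (z₀ + w) = A + w ^ k * (c + w * T2.eval w) := by
    intro w
    have h1 : p.eval (z₀ + w) = T.eval w := by
      rw [hT, Polynomial.taylor_eval, add_comm]
    have h2 : T = Polynomial.C A + Polynomial.X ^ k * T1 := by
      rw [← hT1]; ring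
    rw [h1, h2, hT1e]
    simp [Polynomial.eval_mul, Polynomial.eval_pow]
  set g : ℝ → ℂ := fun α => u ^ (k + 1) * T2.eval ((α : ℂ) * u) with hg
  set b : ℂ := c * u ^ k with hb
  have heval' : ∀ α : ℝ, p.eval (z₀ + (α : ℂ) * u)
      = A + (((α ^ k : ℝ)) : ℂ) * (b + (α : ℂ) * g α) := by
    intro α
    rw [heval ((α : ℂ) * u), hg, hb]
    push_cast
    ring
  have hAb : (A * (starRingEnd ℂ) b).re = (u ^ (k - 1)).re * Complex.normSq u := by
    have hconjre : (A * (starRingEnd ℂ) b).re = ((starRingEnd ℂ) A * b).re := by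
      rw [← Complex.conj_re (A * (starRingEnd ℂ) b)]
      simp
    have hkk : u ^ k = u * u ^ (k - 1) := by
      rw [← pow_succ']
      congr 1
      omega
    have key : (starRingEnd ℂ) A * b = (u * (starRingEnd ℂ) u) * u ^ (k - 1) := by
      rw [hb, hkk, hc, hu]
      simp only [map_mul, map_div₀, map_one, map_natCast, Complex.conj_conj]
      field_simp
    rw [hconjre, key, Complex.mul_conj, Complex.re_ofReal_mul]
    ring
  set G : ℝ → ℝ := fun α => α ^ k * Complex.normSq (b + (α : ℂ) * g α)
      + 2 * α * (A * (starRingEnd ℂ) (g α)).re with hG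
  refine ⟨fun α => α ^ k * G α, ?_, ?_⟩
  · intro α
    rw [hφ α, heval' α, Complex.sq_norm, Complex.sq_norm, aux_normSq, aux_re, hAb, hG]
    rw [Complex.sq_norm]
    ring
  · have hgc : Continuous g := by
      have : Continuous fun α : ℝ => T2.eval ((α : ℂ) * u) :=
        (Polynomial.continuous T2).comp (Complex.continuous_ofReal.mul continuous_const)
      exact continuous_const.mul this
    have hGc : Continuous G := by
      apply Continuous.add
      · exact (continuous_pow k).mul (Complex.continuous_normSq.comp
          (continuous_const.add (Complex.continuous_ofReal.mul hgc)))
      · exact ((continuous_const.mul continuous_id).mul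
          (Complex.continuous_re.comp ((continuous_const.mul hgc.star))))
    have hG0 : G 0 = 0 := by
      simp [hG, zero_pow (by omega : k ≠ 0)]
    have htend : Filter.Tendsto G (nhdsWithin 0 (Set.Ioi 0)) (nhds 0) := by
      have := (hGc.tendsto 0).mono_left (nhdsWithin_le_nhds (s := Set.Ioi (0:ℝ)))
      rwa [hG0] at this
    apply htend.congr'
    filter_upwards [self_mem_nhdsWithin] with α (hα : α ∈ Set.Ioi 0)
    have : (α : ℝ) ^ k ≠ 0 := pow_ne_zero k (ne_of_gt hα)
    field_simp
end
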